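/- Suppose X is a positive random variable with a₁, a₂, a₃, a₄ > 0 satisfying a₁ − a₃ = a₄ − a₂, and suppose that almost surely (a₄/a₁)·X/(1+X) + (a₃/a₁)·αX/(1+αX) = 1 for some α > 0. Then X satisfies the quadratic equation α a₂ X² + (α(a₂−a₄) + a₄ − a₁)X − a₁ = 0 almost surely; in particular, X is almost surely constant (Dirac). -/

import Mathlib

open MeasureTheory

theorem stmt12 {Ω : Type*} [MeasurableSpace Ω] (μ : Measure Ω)
    [IsProbabilityMeasure μ] (X : Ω → ℝ) (hXpos : ∀ᵐ ω ∂μ, 0 < X ω)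
    (α a₁ a₂ a₃ a₄ : ℝ) (hα : 0 < α) (ha₁ : 0 < a₁) (ha₂ : 0 < a₂)
    (ha₃ : 0 < a₃) (ha₄ : 0 < a₄) (hsum : a₁ - a₃ = a₄ - a₂)
    (heq : ∀ᵐ ω ∂μ,
      a₄ / a₁ * (X ω / (1 + X ω)) + a₃ / a₁ * (α * X ω / (1 + α * X ω)) = 1) :
    (∀ᵐ ω ∂μ,
      α * a₂ * X ω ^ 2 + (α * (a₂ - a₄) + a₄ - a₁) * X ω - a₁ = 0) ∧
    ∃ c : ℝ, ∀ᵐ ω ∂μ, X ω = c := by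
  have hq : ∀ᵐ ω ∂μ,
      α * a₂ * X ω ^ 2 + (α * (a₂ - a₄) + a₄ - a₁) * X ω - a₁ = 0 := by
    filter_upwards [hXpos, heq] with ω hx h
    have h1 : (1 : ℝ) + X ω ≠ 0 := by positivity
    have h2 : (1 : ℝ) + α * X ω ≠ 0 := by positivity
    field_simp at h
    have h' : a₁ * (a₄ * X ω * (1 + α * X ω) + a₃ * (α * X ω) * (1 + X ω)) =
        a₁ * ((1 + X ω) * (a₁ * (1 + α * X ω))) := by linear_combination a₁ * h
    have h'' := mul_left_cancel₀ (ne_of_gt ha₁) h'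
    linear_combination h'' + α * (X ω ^ 2 + X ω) * hsum
  have huniq : ∀ x y : ℝ, 0 < x → 0 < y →
      α * a₂ * x ^ 2 + (α * (a₂ - a₄) + a₄ - a₁) * x - a₁ = 0 →
      α * a₂ * y ^ 2 + (α * (a₂ - a₄) + a₄ - a₁) * y - a₁ = 0 → x = y := by
    intro x y hx hy h1 h2
    have hA : 0 < α * a₂ := mul_pos hα ha₂
    have hfac : (x - y) * (α * a₂ * (x + y) + (α * (a₂ - a₄) + a₄ - a₁)) = 0 := by
      linear_combination h1 - h2
    rcases mul_eq_zero.mp hfac with h | h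
    · linarith
    · exfalso
      nlinarith [mul_pos hx hy]
  refine ⟨hq, ?_⟩
  have hne : μ ≠ 0 := IsProbabilityMeasure.ne_zero μ
  have : (ae μ).NeBot := ae_neBot.mpr hne
  obtain ⟨ω₀, hω₀q, hω₀p⟩ := (hq.and hXpos).exists
  refine ⟨X ω₀, ?_⟩
  filter_upwards [hq, hXpos] with ω hωq hωp
  exact huniq _ _ hωp hω₀p hωq hω₀q
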